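/- Let ψ: ℝⁿ → ℝ be η-weakly convex and L-Lipschitz continuous, and μ ∈ (0, η⁻¹). Then for all z ∈ ℝⁿ, ‖z − prox_{μψ}(z)‖ ≤ μL/(1 − ημ); in particular ‖∇(μψ)(z)‖ ≤ L/(1 − ημ). -/

import Mathlib

open Set

/-- ‖z − prox_{μψ}(z)‖ ≤ μL/(1 − ημ), hence ‖∇(μψ)(z)‖ ≤ L/(1 − ημ). -/
theorem stmt4 {n : ℕ} (ψ : EuclideanSpace ℝ (Fin n) → ℝ) (η μ L : ℝ)
    (hη : 0 < η) (hμ : μ ∈ Set.Ioo 0 η⁻¹) (hL : 0 ≤ L)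
    (hwc : ConvexOn ℝ Set.univ (fun z => ψ z + (η / 2) * ‖z‖ ^ 2))
    (hlip : ∀ x y, |ψ x - ψ y| ≤ L * ‖x - y‖)
    (prox : EuclideanSpace ℝ (Fin n) → EuclideanSpace ℝ (Fin n))
    (hprox : ∀ z, IsMinOn (fun w => ψ w + (1 / (2 * μ)) * ‖w - z‖ ^ 2) Set.univ (prox z)) :
    ∀ z, ‖z - prox z‖ ≤ μ * L / (1 - η * μ) ∧
      ‖μ⁻¹ • (z - prox z)‖ ≤ L / (1 - η * μ) := by
  obtain ⟨hμ0, hμη⟩ := hμ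
  have hημ : η * μ < 1 := by
    calc η * μ < η * η⁻¹ := mul_lt_mul_of_pos_left hμη hη
      _ = 1 := mul_inv_cancel₀ hη.ne'
  have h1 : 0 < 1 - η * μ := by linarith
  intro z
  set p := prox z with hp
  set d := ‖z - p‖ with hd
  have hdnn : 0 ≤ d := norm_nonneg _
  have key : d ≤ μ * L / (1 - η * μ) := by
    rcases eq_or_lt_of_le hdnn with h0 | h0
    · rw [← h0]; positivity
    · set t := η * μ with hT
      have ht0 : 0 < t := mul_pos hη hμ0
      have ht1 : t < 1 := hημ
      set w : EuclideanSpace ℝ (Fin n) := p + t • (z - p) with hw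
      have hmin := isMinOn_iff.mp (hprox z) w (mem_univ w)
      have hpz : ‖p - z‖ = d := by rw [hd, norm_sub_rev]
      have hnorm1 : ‖w - z‖ = (1 - t) * d := by
        have he : w - z = -((1 - t) • (z - p)) := by rw [hw]; module
        rw [he, norm_neg, norm_smul, Real.norm_eq_abs, abs_of_nonneg (by linarith), ← hd]
      have hψ : ψ w - ψ p ≤ L * (t * d) := by
        have hns : ‖w - p‖ = t * d := by
          have he : w - p = t • (z - p) := by rw [hw]; module
          rw [he, norm_smul, Real.norm_eq_abs, abs_of_pos ht0, ← hd]
        calc ψ w - ψ p ≤ |ψ w - ψ p| := le_abs_self _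
          _ ≤ L * ‖w - p‖ := hlip _ _
          _ = L * (t * d) := by rw [hns]
      have hA : ψ p + (1 / (2 * μ)) * d ^ 2 ≤ ψ w + (1 / (2 * μ)) * ((1 - t) * d) ^ 2 := by
        simpa [← hp, hpz, hnorm1] using hmin
      have h2μ : (0:ℝ) < 2 * μ := by linarith
      have h2 : (d ^ 2 - ((1 - t) * d) ^ 2) / (2 * μ) ≤ L * (t * d) := by
        have h2' : (1 / (2 * μ)) * (d ^ 2 - ((1 - t) * d) ^ 2) ≤ L * (t * d) := by
          nlinarith [hA, hψ]
        rw [one_div, inv_mul_eq_div] at h2'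
        exact h2'
      have h3 : d ^ 2 - ((1 - t) * d) ^ 2 ≤ L * (t * d) * (2 * μ) :=
        (div_le_iff₀ h2μ).mp h2
      have hstep : (2 - t) * d ≤ 2 * μ * L := by
        have htd : 0 < t * d := mul_pos ht0 h0
        nlinarith [h3, htd]
      rw [le_div_iff₀ h1]
      nlinarith [hstep, mul_nonneg ht0.le hdnn]
  refine ⟨key, ?_⟩
  have hinv : 0 < μ⁻¹ := inv_pos.mpr hμ0
  have hn : ‖μ⁻¹ • (z - p)‖ = μ⁻¹ * d := by
    rw [norm_smul, Real.norm_eq_abs, abs_of_pos hinv, ← hd]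
  rw [hn]
  calc μ⁻¹ * d ≤ μ⁻¹ * (μ * L / (1 - η * μ)) := by
        exact mul_le_mul_of_nonneg_left key hinv.le
    _ = L / (1 - η * μ) := by field_simp
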